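/- Let Q ⊆ ℝ³ be a bounded open set and let μH² denote the 2-dimensional Hausdorff measure on ℝ³. Suppose there is a constant c₀ > 0 such that for every continuously differentiable w : ℝ³ → ℝ one has ∫_{∂Q} w² dμH² ≤ c₀·( ∫_Q ‖∇w‖² dx + ∫_Q w² dx ). Then for every ε > 0 and every continuously differentiable v : ℝ³ → ℝ, ε·∫_{ε•∂Q} v² dμH² ≤ c₀·( ε²·∫_{ε•Q} ‖∇v‖² dx + ∫_{ε•Q} v² dx ), where ε•S := {ε·x : x ∈ S}, ∂Q is the topological boundary of Q, volume integrals are with respect to Lebesgue measure, and ∇v is the gradient of v. -/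

import Mathlib

open MeasureTheory
open scoped Pointwise
open scoped MeasureTheory ENNReal

open Set
open scoped NNReal

noncomputable abbrev E3 := EuclideanSpace ℝ (Fin 3)

lemma map_smul_hausdorff {R : ℝ} (hR : R ≠ 0) :
    Measure.map (fun x : E3 => R • x) (μH[2] : Measure E3)
      = ((‖R⁻¹‖₊ ^ (2:ℝ) : ℝ≥0) : ℝ≥0∞) • (μH[2] : Measure E3) := by
  ext s hs
  rw [Measure.map_apply (measurable_const_smul R) hs]
  have hpre : (fun x : E3 => R • x) ⁻¹' s = R⁻¹ • s := by
    ext x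
    simp [Set.mem_smul_set_iff_inv_smul_mem₀ (inv_ne_zero hR), inv_inv]
  rw [hpre, Measure.hausdorffMeasure_smul₀ (by norm_num : (0:ℝ) ≤ 2) (inv_ne_zero hR)]
  simp [Measure.smul_apply]

lemma setIntegral_comp_smul_hausdorff (f : E3 → ℝ) {R : ℝ} (hR : 0 < R) (s : Set E3) :
    ∫ x in s, f (R • x) ∂(μH[2] : Measure E3)
      = (R ^ 2)⁻¹ • ∫ x in R • s, f x ∂(μH[2] : Measure E3) := by
  let e : E3 ≃ᵐ E3 := (Homeomorph.smul (Units.mk0 R hR.ne')).toMeasurableEquiv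
  have hset : e.symm ⁻¹' s = R • s := by
    ext y
    rw [mem_smul_set_iff_inv_smul_mem₀ hR.ne']
    rfl
  calc ∫ x in s, f (R • x) ∂(μH[2] : Measure E3)
      = ∫ x in e ⁻¹' (e.symm ⁻¹' s), f (e x) ∂(μH[2] : Measure E3) := by
        simp [← Set.preimage_comp]; rfl
    _ = ∫ y in e.symm ⁻¹' s, f y ∂(Measure.map (fun x : E3 ↦ R • x) μH[2]) :=
        (setIntegral_map_equiv _ _ _).symm
    _ = (R ^ 2)⁻¹ • ∫ y in e.symm ⁻¹' s, f y ∂(μH[2] : Measure E3) := by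
        rw [map_smul_hausdorff hR.ne', Measure.restrict_smul, integral_smul_measure]
        congr 1
        have : ((‖R⁻¹‖₊ ^ (2:ℝ) : ℝ≥0) : ℝ≥0∞).toReal = (R ^ 2)⁻¹ := by
          rw [ENNReal.coe_toReal]
          rw [NNReal.coe_rpow, coe_nnnorm, Real.norm_eq_abs,
            abs_of_pos (inv_pos.2 hR), ← Real.rpow_natCast]
          norm_num
        rw [this]
    _ = (R ^ 2)⁻¹ • ∫ x in R • s, f x ∂(μH[2] : Measure E3) := by rw [hset]

lemma gradient_comp_smul (v : E3 → ℝ) (hv : ContDiff ℝ 1 v) (R : ℝ) (x : E3) :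
    gradient (fun y => v (R • y)) x = R • gradient v (R • x) := by
  have hd : DifferentiableAt ℝ v (R • x) := (hv.differentiable one_ne_zero) _
  have h1 : HasFDerivAt (fun y : E3 => R • y) (R • (ContinuousLinearMap.id ℝ E3)) x :=
    (hasFDerivAt_id x).const_smul R
  have h2 : HasFDerivAt (fun y => v (R • y))
      ((fderiv ℝ v (R • x)).comp (R • ContinuousLinearMap.id ℝ E3)) x :=
    hd.hasFDerivAt.comp x h1
  have h3 : (fderiv ℝ v (R • x)).comp (R • ContinuousLinearMap.id ℝ E3)
      = R • fderiv ℝ v (R • x) := by ext y; simp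
  rw [gradient, h2.fderiv, h3, gradient]
  simp

/-- First inequality (3.4): if the trace inequality
`∫_{∂Q} w² dμH² ≤ c₀ (∫_Q ‖∇w‖² + ∫_Q w²)` holds on the bounded open reference
domain `Q`, then on the scaled domain `ε•Q` one has
`ε ∫_{ε•∂Q} v² dμH² ≤ c₀ (ε² ∫_{ε•Q} ‖∇v‖² + ∫_{ε•Q} v²)`. -/
theorem stmt_7 (Q : Set (EuclideanSpace ℝ (Fin 3))) (hQb : Bornology.IsBounded Q)
    (hQo : IsOpen Q) (c₀ : ℝ) (hc₀ : 0 < c₀)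
    (htrace : ∀ w : EuclideanSpace ℝ (Fin 3) → ℝ, ContDiff ℝ 1 w →
      ∫ x in frontier Q, (w x) ^ 2 ∂(μH[2]) ≤
        c₀ * ((∫ x in Q, ‖gradient w x‖ ^ 2) + ∫ x in Q, (w x) ^ 2)) :
    ∀ ε : ℝ, 0 < ε → ∀ v : EuclideanSpace ℝ (Fin 3) → ℝ, ContDiff ℝ 1 v →
      ε * ∫ x in ε • frontier Q, (v x) ^ 2 ∂(μH[2]) ≤
        c₀ * (ε ^ 2 * (∫ x in ε • Q, ‖gradient v x‖ ^ 2) +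
          ∫ x in ε • Q, (v x) ^ 2) := by
  intro ε hε v hv
  set A := ∫ x in ε • frontier Q, (v x) ^ 2 ∂(μH[2]) with hA
  set B := ∫ x in ε • Q, ‖gradient v x‖ ^ 2 with hB
  set C := ∫ x in ε • Q, (v x) ^ 2 with hC
  set w : E3 → ℝ := fun x => v (ε • x) with hwdef
  have hw : ContDiff ℝ 1 w := hv.comp (contDiff_const_smul ε)
  have h := htrace w hw
  have hL : ∫ x in frontier Q, (w x) ^ 2 ∂(μH[2] : Measure E3) = (ε ^ 2)⁻¹ * A :=
    setIntegral_comp_smul_hausdorff (fun y => (v y) ^ 2) hε (frontier Q)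
  have hfr : Module.finrank ℝ E3 = 3 := by simp [finrank_euclideanSpace]
  have hCw : ∫ x in Q, (w x) ^ 2 = (ε ^ 3)⁻¹ * C := by
    have := Measure.setIntegral_comp_smul_of_pos (volume : Measure E3)
      (fun y => (v y) ^ 2) Q hε
    rw [hfr] at this
    exact this
  have hGw : ∫ x in Q, ‖gradient w x‖ ^ 2 = ε ^ 2 * ((ε ^ 3)⁻¹ * B) := by
    have h1 : ∀ x : E3, ‖gradient w x‖ ^ 2 = ε ^ 2 * ‖gradient v (ε • x)‖ ^ 2 := by
      intro x
      rw [hwdef, gradient_comp_smul v hv ε x, norm_smul]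
      simp [Real.norm_eq_abs, abs_of_pos hε, mul_pow]
    calc ∫ x in Q, ‖gradient w x‖ ^ 2
        = ∫ x in Q, ε ^ 2 * ‖gradient v (ε • x)‖ ^ 2 := by simp_rw [h1]
      _ = ε ^ 2 * ∫ x in Q, ‖gradient v (ε • x)‖ ^ 2 := integral_const_mul _ _
      _ = ε ^ 2 * ((ε ^ 3)⁻¹ * B) := by
          congr 1
          have := Measure.setIntegral_comp_smul_of_pos (volume : Measure E3)
            (fun y => ‖gradient v y‖ ^ 2) Q hε
          rw [hfr] at this
          exact this
  rw [hL, hGw, hCw] at h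
  have h4 := mul_le_mul_of_nonneg_left h (pow_pos hε 3).le
  calc ε * A = ε ^ 3 * ((ε ^ 2)⁻¹ * A) := by field_simp
    _ ≤ ε ^ 3 * (c₀ * (ε ^ 2 * ((ε ^ 3)⁻¹ * B) + (ε ^ 3)⁻¹ * C)) := h4
    _ = c₀ * (ε ^ 2 * B + C) := by field_simp
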